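/- Let 𝒫=(P,w) be a positive-weighted polygon with V(P)={1,...,n} that is not pruned. Then P has exactly one useless edge e, and deleting e from P yields a positive-weighted snake 𝒫̃ with V(𝒫̃)={1,...,n} whose 2-weights coincide with those of 𝒫, i.e. D_{i,j}(𝒫̃)=D_{i,j}(𝒫) for all distinct i,j. -/

import Mathlib

open SimpleGraph

variable {V : Type*}

/-- weight of a walk: sum of the weights of its edges -/
noncomputable def walkWeight (G : SimpleGraph V) (w : Sym2 V → ℝ) {i j : V} (p : G.Walk i j) : ℝ :=
  (p.edges.map w).sum

/-- the 2-weight: min over paths joining i and j -/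
noncomputable def wdist (G : SimpleGraph V) (w : Sym2 V → ℝ) (i j : V) : ℝ :=
  sInf {x : ℝ | ∃ p : G.Walk i j, p.IsPath ∧ walkWeight G w p = x}

def Realizes (G : SimpleGraph V) (w : Sym2 V → ℝ) {i j : V} (p : G.Walk i j) : Prop :=
  p.IsPath ∧ walkWeight G w p = wdist G w i j

def UsefulEdge (G : SimpleGraph V) (w : Sym2 V → ℝ) (e : Sym2 V) : Prop :=
  ∃ a b : V, a ≠ b ∧ ∀ p : G.Walk a b, Realizes G w p → e ∈ p.edges

def Pruned (G : SimpleGraph V) (w : Sym2 V → ℝ) : Prop :=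
  ∀ e ∈ G.edgeSet, UsefulEdge G w e

def PosWeights (G : SimpleGraph V) (w : Sym2 V → ℝ) : Prop :=
  ∀ e ∈ G.edgeSet, 0 < w e

def Indec (G : SimpleGraph V) (w : Sym2 V → ℝ) (i j : V) : Prop :=
  ∀ z : V, z ≠ i → z ≠ j → wdist G w i j < wdist G w i z + wdist G w z j

def IsLeaf (G : SimpleGraph V) (v : V) : Prop := (G.neighborSet v).ncard = 1

def IsSnake (G : SimpleGraph V) : Prop :=
  G.IsTree ∧ {v : V | IsLeaf G v}.ncard = 2

def IsCaterpillar (G : SimpleGraph V) : Prop :=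
  G.IsTree ∧ ∃ (x₁ x₂ : V) (p : G.Walk x₁ x₂), p.IsPath ∧
    {v : V | v ∈ p.support} = {v : V | 2 ≤ (G.neighborSet v).ncard}

def IsPolygon {n : ℕ} [NeZero n] (G : SimpleGraph (Fin n)) : Prop :=
  ∃ σ : Equiv.Perm (Fin n), G.edgeSet = Set.range (fun i : Fin n => s(σ i, σ (i + 1)))

noncomputable def tmin (G : SimpleGraph V) (w : Sym2 V → ℝ) (x : V) : ℝ :=
  (1 / 2) * sInf {r : ℝ | ∃ y z : V, y ≠ x ∧ z ≠ x ∧ y ≠ z ∧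
    r = wdist G w x y + wdist G w x z - wdist G w y z}

def IsBipartiteOn (G : SimpleGraph V) (X Y : Set V) : Prop :=
  X ∩ Y = ∅ ∧ X ∪ Y = Set.univ ∧ ∀ a b : V, G.Adj a b → (a ∈ X ∧ b ∈ Y) ∨ (a ∈ Y ∧ b ∈ X)

noncomputable def chainSum {α : Type*} (D : α → α → ℝ) : List α → ℝ
  | [] => 0
  | [_] => 0
  | a :: b :: l => D a b + chainSum D (b :: l)

def FIndec {n : ℕ} (D : Fin n → Fin n → ℝ) (i j : Fin n) : Prop :=
  ∀ z : Fin n, z ≠ i → z ≠ j → D i j < D i z + D z j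

def TriangleIneq {n : ℕ} (D : Fin n → Fin n → ℝ) : Prop :=
  ∀ i j k : Fin n, i ≠ j → j ≠ k → i ≠ k → D i j ≤ D i k + D k j

def MaxTwice (x y z : ℝ) : Prop :=
  (x = y ∧ z ≤ x) ∨ (x = z ∧ y ≤ x) ∨ (y = z ∧ x ≤ y)

def FourPoint {n : ℕ} (D : Fin n → Fin n → ℝ) : Prop :=
  ∀ i j k h : Fin n, i ≠ j → i ≠ k → i ≠ h → j ≠ k → j ≠ h → k ≠ h →
    MaxTwice (D i j + D k h) (D i k + D j h) (D i h + D k j)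

def MedianFamily {n : ℕ} (D : Fin n → Fin n → ℝ) : Prop :=
  ∀ a b c : Fin n, ∃! m : Fin n,
    ∀ i ∈ ({a, b, c} : Set (Fin n)), ∀ j ∈ ({a, b, c} : Set (Fin n)), i ≠ j →
      D i j = D i m + D j m

noncomputable def tminF {n : ℕ} (D : Fin n → Fin n → ℝ) (x : Fin n) : ℝ :=
  (1 / 2) * sInf {r : ℝ | ∃ y z : Fin n, y ≠ x ∧ z ≠ x ∧ y ≠ z ∧ r = D x y + D x z - D y z}

def interiorSet {G : SimpleGraph V} {u v : V} (p : G.Walk u v) : Set V :=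
  {x : V | x ∈ p.support ∧ x ≠ u ∧ x ≠ v}

/-! ### Auxiliary lemmas -/

section WalkWeightAux

variable {W : Type*} {G H : SimpleGraph W} {w : Sym2 W → ℝ}

lemma walkWeight_nil' {u : W} : walkWeight G w (Walk.nil : G.Walk u u) = 0 := by
  simp [walkWeight]

lemma walkWeight_cons' {a b c : W} (h : G.Adj a b) (p : G.Walk b c) :
    walkWeight G w (Walk.cons h p) = w s(a, b) + walkWeight G w p := by
  simp [walkWeight]

lemma walkWeight_copy' {u v u' v' : W} (p : G.Walk u v) (hu : u = u') (hv : v = v') :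
    walkWeight G w (p.copy hu hv) = walkWeight G w p := by
  simp [walkWeight]

lemma walkWeight_transfer' {u v : W} (p : G.Walk u v) (hp : ∀ e ∈ p.edges, e ∈ H.edgeSet) :
    walkWeight H w (p.transfer H hp) = walkWeight G w p := by
  simp [walkWeight, Walk.edges_transfer]

lemma walkWeight_nonneg' (hw : ∀ e ∈ G.edgeSet, 0 ≤ w e) {i j : W} (p : G.Walk i j) :
    0 ≤ walkWeight G w p := by
  apply List.sum_nonneg
  intro x hx
  obtain ⟨e, he, rfl⟩ := List.mem_map.1 hx
  exact hw e (p.edges_subset_edgeSet he)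

lemma bddBelow_weights (hw : ∀ e ∈ G.edgeSet, 0 ≤ w e) (i j : W) :
    BddBelow {x : ℝ | ∃ p : G.Walk i j, p.IsPath ∧ walkWeight G w p = x} := by
  refine ⟨0, ?_⟩
  rintro x ⟨p, hp, rfl⟩
  exact walkWeight_nonneg' hw p

lemma wdist_le_walkWeight (hw : ∀ e ∈ G.edgeSet, 0 ≤ w e) {i j : W} (p : G.Walk i j)
    (hp : p.IsPath) : wdist G w i j ≤ walkWeight G w p :=
  csInf_le (bddBelow_weights hw i j) ⟨p, hp, rfl⟩

end WalkWeightAux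

section HeightAux

variable {W : Type*} {G : SimpleGraph W} {f : W → ℕ}

lemma height_up (hinj : Function.Injective f)
    (hadj : ∀ u v : W, G.Adj u v → f u = f v + 1 ∨ f v = f u + 1) :
    ∀ {x b : W} (p : G.Walk x b) {a : W} (h : G.Adj a x),
      (Walk.cons h p).IsPath → f x = f a + 1 → ∀ v ∈ p.support, f a < f v := by
  intro x b p
  induction p with
  | nil =>
    intro a h hp hfx v hv
    simp only [Walk.support_nil, List.mem_singleton] at hv
    subst hv; omega
  | @cons x z b h2 rest ih =>
    intro a h hp hfx v hv
    rw [Walk.cons_isPath_iff] at hp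
    rcases hadj x z h2 with hxz | hzx
    · exfalso
      have hz : z = a := hinj (by omega)
      have : a ∈ (Walk.cons h2 rest).support := by
        rw [Walk.support_cons]
        exact List.mem_cons_of_mem _ (hz ▸ rest.start_mem_support)
      exact hp.2 this
    · have IH := ih h2 hp.1 hzx
      simp only [Walk.support_cons, List.mem_cons] at hv
      rcases hv with rfl | hv
      · omega
      · have := IH v hv; omega

lemma height_down (hinj : Function.Injective f)
    (hadj : ∀ u v : W, G.Adj u v → f u = f v + 1 ∨ f v = f u + 1) :
    ∀ {x b : W} (p : G.Walk x b) {a : W} (h : G.Adj a x),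
      (Walk.cons h p).IsPath → f a = f x + 1 → ∀ v ∈ p.support, f v < f a := by
  intro x b p
  induction p with
  | nil =>
    intro a h hp hfx v hv
    simp only [Walk.support_nil, List.mem_singleton] at hv
    subst hv; omega
  | @cons x z b h2 rest ih =>
    intro a h hp hfx v hv
    rw [Walk.cons_isPath_iff] at hp
    rcases hadj x z h2 with hxz | hzx
    · have IH := ih h2 hp.1 hxz
      simp only [Walk.support_cons, List.mem_cons] at hv
      rcases hv with rfl | hv
      · omega
      · have := IH v hv; omega
    · exfalso
      have hz : z = a := hinj (by omega)
      have : a ∈ (Walk.cons h2 rest).support := by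
        rw [Walk.support_cons]
        exact List.mem_cons_of_mem _ (hz ▸ rest.start_mem_support)
      exact hp.2 this

lemma height_path_unique (hinj : Function.Injective f)
    (hadj : ∀ u v : W, G.Adj u v → f u = f v + 1 ∨ f v = f u + 1) :
    ∀ {a b : W} (p q : G.Walk a b), p.IsPath → q.IsPath → p = q := by
  intro a b p
  induction p with
  | nil =>
    intro q _ hq
    exact ((Walk.isPath_iff_eq_nil (p := q)).1 hq).symm
  | @cons a x b h p' ih =>
    intro q hp hq
    have hp' := (Walk.cons_isPath_iff h p').1 hp
    cases q with
    | nil => exact (hp'.2 p'.end_mem_support).elim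
    | @cons _ y _ h' q' =>
      have hq' := (Walk.cons_isPath_iff h' q').1 hq
      by_cases hxy : x = y
      · subst hxy
        rw [ih q' hp'.1 hq'.1]
      · exfalso
        rcases hadj a x h with h1 | h1 <;> rcases hadj a y h' with h2 | h2
        · exact hxy (hinj (by omega))
        · have hb1 := height_down hinj hadj p' h hp h1 b p'.end_mem_support
          have hb2 := height_up hinj hadj q' h' hq h2 b q'.end_mem_support
          omega
        · have hb1 := height_up hinj hadj p' h hp h1 b p'.end_mem_support
          have hb2 := height_down hinj hadj q' h' hq h2 b q'.end_mem_support
          omega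
        · exact hxy (hinj (by omega))

end HeightAux

section FinAux

variable {n : ℕ} [NeZero n]

lemma fin_one_ne_zero' (hn : 3 ≤ n) : (1 : Fin n) ≠ 0 := by
  intro h
  have := congrArg Fin.val h
  rw [Fin.val_one', Fin.val_zero, Nat.mod_eq_of_lt (by omega)] at this
  omega

lemma fin_two_ne_zero' (hn : 3 ≤ n) : (1 + 1 : Fin n) ≠ 0 := by
  intro h
  have h1 : (1 : Fin n).val = 1 := by
    rw [Fin.val_one', Nat.mod_eq_of_lt (by omega)]
  have := congrArg Fin.val h
  rw [Fin.val_add, h1, Fin.val_zero, Nat.mod_eq_of_lt (by omega)] at this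
  omega

lemma fin_val_add_one' (hn : 3 ≤ n) {x : Fin n} (hx : x + 1 ≠ 0) :
    (x + 1).val = x.val + 1 := by
  have h1 : (1 : Fin n).val = 1 := by
    rw [Fin.val_one', Nat.mod_eq_of_lt (by omega)]
  rw [Fin.val_add, h1]
  rcases Nat.lt_or_ge (x.val + 1) n with hlt | hge
  · exact Nat.mod_eq_of_lt hlt
  · exfalso
    have hxv := x.isLt
    apply hx
    apply Fin.ext
    rw [Fin.val_add, h1, Fin.val_zero]
    have hxe : x.val + 1 = n := by omega
    rw [hxe, Nat.mod_self]

end FinAux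

section PolyAux

open scoped Fin.CommRing Fin.NatCast Fin.IntCast

variable {n : ℕ} [NeZero n]

lemma polygon_delete_aux (hn : 3 ≤ n) (σ : Equiv.Perm (Fin n)) (P : SimpleGraph (Fin n))
    (hP : P.edgeSet = Set.range (fun i : Fin n => s(σ i, σ (i + 1)))) (k : Fin n)
    (w : Sym2 (Fin n) → ℝ) :
    (P.deleteEdges {s(σ k, σ (k + 1))}).IsTree ∧
    {v : Fin n | IsLeaf (P.deleteEdges {s(σ k, σ (k + 1))}) v} = {σ k, σ (k + 1)} ∧
    ∃ q : (P.deleteEdges {s(σ k, σ (k + 1))}).Walk (σ k) (σ (k + 1)), q.IsPath ∧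
      walkWeight (P.deleteEdges {s(σ k, σ (k + 1))}) w q
        = ∑ i ∈ Finset.univ.erase k, w s(σ i, σ (i + 1)) := by
  have h1 : (1 : Fin n) ≠ 0 := fin_one_ne_zero' hn
  have h2 : (1 + 1 : Fin n) ≠ 0 := fin_two_ne_zero' hn
  set G' : SimpleGraph (Fin n) := P.deleteEdges {s(σ k, σ (k + 1))} with hG'
  -- injectivity of edges
  have hEinj : ∀ i j : Fin n, s(σ i, σ (i + 1)) = s(σ j, σ (j + 1)) → i = j := by
    intro i j hij
    rw [Sym2.eq_iff] at hij
    rcases hij with ⟨ha, _⟩ | ⟨ha, hb⟩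
    · exact σ.injective ha
    · exfalso
      have hij1 : i = j + 1 := σ.injective ha
      have hij2 : i + 1 = j := σ.injective hb
      rw [← hij2] at hij1
      have h5 : i + (1 + 1) = i + 0 := by
        rw [add_zero, ← add_assoc]
        exact hij1.symm
      exact h2 (add_left_cancel h5)
  -- adjacency in G'
  have hG'adj : ∀ i j : Fin n, G'.Adj (σ i) (σ j) ↔
      ((j = i + 1 ∧ i ≠ k) ∨ (i = j + 1 ∧ j ≠ k)) := by
    intro i j
    rw [hG', SimpleGraph.deleteEdges_adj, ← SimpleGraph.mem_edgeSet, hP]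
    simp only [Set.mem_range, Set.mem_singleton_iff]
    constructor
    · rintro ⟨⟨l, hl⟩, hne⟩
      rw [Sym2.eq_iff] at hl
      rcases hl with ⟨ha, hb⟩ | ⟨ha, hb⟩
      · have hi : i = l := (σ.injective ha).symm
        have hj : j = l + 1 := (σ.injective hb).symm
        refine Or.inl ⟨?_, ?_⟩
        · rw [hi, hj]
        · rw [hi]
          intro hlk
          apply hne
          rw [hi, hj, hlk]
      · have hj : j = l := (σ.injective ha).symm
        have hi : i = l + 1 := (σ.injective hb).symm
        refine Or.inr ⟨?_, ?_⟩
        · rw [hi, hj]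
        · rw [hj]
          intro hlk
          apply hne
          rw [hi, hj, hlk]
          exact Sym2.eq_swap
    · rintro (⟨rfl, hik⟩ | ⟨rfl, hjk⟩)
      · exact ⟨⟨i, rfl⟩, fun hc => hik (hEinj i k hc)⟩
      · refine ⟨⟨j, Sym2.eq_swap⟩, fun hc => hjk (hEinj j k ?_)⟩
        rw [Sym2.eq_swap]
        exact hc
  -- the height function
  set f : Fin n → ℕ := fun v => ((σ.symm v) - (k + 1)).val with hf
  have hfinj : Function.Injective f := by
    intro u v huv
    have h3 : σ.symm u - (k + 1) = σ.symm v - (k + 1) := Fin.ext huv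
    have h4 : σ.symm u = σ.symm v := sub_left_injective h3
    exact σ.symm.injective h4
  have hkey : ∀ i' : Fin n, i' ≠ k → (i' + 1 - (k + 1)).val = (i' - (k + 1)).val + 1 := by
    intro i' hik
    have h3 : i' + 1 - (k + 1) = (i' - (k + 1)) + 1 := by ring
    rw [h3]
    apply fin_val_add_one' hn
    have h4 : i' - (k + 1) + 1 = i' - k := by ring
    rw [h4]
    exact sub_ne_zero.2 hik
  have hfadj : ∀ u v : Fin n, G'.Adj u v → f u = f v + 1 ∨ f v = f u + 1 := by
    intro u v huv
    have hu : u = σ (σ.symm u) := (σ.apply_symm_apply u).symm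
    have hv : v = σ (σ.symm v) := (σ.apply_symm_apply v).symm
    rw [hu, hv, hG'adj] at huv
    rcases huv with ⟨hj, hik⟩ | ⟨hi, hjk⟩
    · right
      show (σ.symm v - (k + 1)).val = (σ.symm u - (k + 1)).val + 1
      rw [hj]
      exact hkey _ hik
    · left
      show (σ.symm u - (k + 1)).val = (σ.symm v - (k + 1)).val + 1
      rw [hi]
      exact hkey _ hjk
  -- non-wrap lemma
  have hne_k : ∀ j : ℕ, j < n - 1 → k + 1 + (j : Fin n) ≠ k := by
    intro j hj hc
    have h3 : k + (1 + (j : Fin n)) = k + 0 := by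
      rw [add_zero, ← add_assoc]; exact hc
    have h4 : ((1 + j : ℕ) : Fin n) = 0 := by
      push_cast
      exact add_left_cancel h3
    have := congrArg Fin.val h4
    rw [Fin.val_natCast, Fin.val_zero, Nat.mod_eq_of_lt (by omega)] at this
    omega
  -- the arc walks
  have harc : ∀ m : ℕ, m ≤ n - 1 →
      ∃ p : G'.Walk (σ (k + 1 + (m : Fin n))) (σ (k + 1)), p.IsPath ∧
        walkWeight G' w p
          = ∑ j ∈ Finset.range m, w s(σ (k + 1 + (j : Fin n)), σ (k + 1 + (j : Fin n) + 1)) ∧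
        ∀ x ∈ p.support, ∃ j : ℕ, j ≤ m ∧ x = σ (k + 1 + (j : Fin n)) := by
    intro m
    induction m with
    | zero =>
      intro _
      refine ⟨Walk.nil.copy (by norm_num) rfl, ?_, ?_, ?_⟩
      · rw [Walk.isPath_copy]; exact Walk.IsPath.nil
      · rw [walkWeight_copy', walkWeight_nil', Finset.sum_range_zero]
      · intro x hx
        rw [Walk.support_copy] at hx
        simp only [Walk.support_nil, List.mem_singleton] at hx
        exact ⟨0, le_refl 0, by rw [hx]; norm_num⟩
    | succ m ih =>
      intro hm1
      obtain ⟨p, hpath, hwt, hsupp⟩ := ih (by omega)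
      have hbk : k + 1 + (m : Fin n) ≠ k := hne_k m (by omega)
      have hadj1 : G'.Adj (σ (k + 1 + (m : Fin n) + 1)) (σ (k + 1 + (m : Fin n))) := by
        rw [hG'adj]
        exact Or.inr ⟨rfl, hbk⟩
      have hab : k + 1 + ((m + 1 : ℕ) : Fin n) = k + 1 + (m : Fin n) + 1 := by
        push_cast; ring
      refine ⟨(Walk.cons hadj1 p).copy (congrArg σ hab.symm) rfl, ?_, ?_, ?_⟩
      · rw [Walk.isPath_copy, Walk.cons_isPath_iff]
        refine ⟨hpath, fun hmem => ?_⟩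
        obtain ⟨j, hjm, hjx⟩ := hsupp _ hmem
        have h3 : k + 1 + (m : Fin n) + 1 = k + 1 + (j : Fin n) := σ.injective hjx
        rw [← hab] at h3
        have h4 : ((m + 1 : ℕ) : Fin n) = (j : Fin n) := by
          exact add_left_cancel h3
        have := congrArg Fin.val h4
        rw [Fin.val_natCast, Fin.val_natCast, Nat.mod_eq_of_lt (by omega),
          Nat.mod_eq_of_lt (by omega)] at this
        omega
      · rw [walkWeight_copy', walkWeight_cons', hwt, Finset.sum_range_succ,
          show s(σ (k + 1 + (m : Fin n) + 1), σ (k + 1 + (m : Fin n)))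
            = s(σ (k + 1 + (m : Fin n)), σ (k + 1 + (m : Fin n) + 1)) from Sym2.eq_swap]
        ring
      · intro x hx
        rw [Walk.support_copy, Walk.support_cons] at hx
        rcases List.mem_cons.1 hx with rfl | hx
        · exact ⟨m + 1, le_refl _, (congrArg σ hab).symm⟩
        · obtain ⟨j, hj, hjx⟩ := hsupp x hx
          exact ⟨j, by omega, hjx⟩
  -- connectivity
  have hreach : ∀ u : Fin n, G'.Reachable u (σ (k + 1)) := by
    intro u
    have hu : u = σ (σ.symm u) := (σ.apply_symm_apply u).symm
    have hm1 : ((σ.symm u - (k + 1)).val : ℕ) ≤ n - 1 := by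
      have := (σ.symm u - (k + 1)).isLt; omega
    obtain ⟨p, -, -, -⟩ := harc _ hm1
    have h3 : k + 1 + (((σ.symm u - (k + 1)).val : ℕ) : Fin n) = σ.symm u := by
      rw [Fin.cast_val_eq_self]; ring
    rw [hu, ← h3]
    exact ⟨p⟩
  have hconn : G'.Connected := by
    rw [SimpleGraph.connected_iff]
    exact ⟨fun u v => (hreach u).trans (hreach v).symm, ⟨k⟩⟩
  have htree : G'.IsTree :=
    ⟨hconn, isAcyclic_of_path_unique fun v u p q =>
      Subtype.ext (height_path_unique hfinj hfadj p.1 q.1 p.2 q.2)⟩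
  refine ⟨htree, ?_, ?_⟩
  · -- the leaf set
    have hnbrk : G'.neighborSet (σ k) = {σ (k - 1)} := by
      ext x
      have hx : x = σ (σ.symm x) := (σ.apply_symm_apply x).symm
      simp only [SimpleGraph.mem_neighborSet, Set.mem_singleton_iff]
      rw [hx, hG'adj]
      constructor
      · rintro (⟨h3, h4⟩ | ⟨h3, h4⟩)
        · exact absurd rfl h4
        · refine congrArg σ ?_
          rw [h3]; ring
      · intro hxe
        have h3 : σ.symm x = k - 1 := σ.injective hxe
        refine Or.inr ⟨by rw [h3]; ring, ?_⟩
        rw [h3]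
        intro hc
        exact h1 (sub_eq_self.1 hc)
    have hnbrk1 : G'.neighborSet (σ (k + 1)) = {σ (k + 1 + 1)} := by
      ext x
      have hx : x = σ (σ.symm x) := (σ.apply_symm_apply x).symm
      simp only [SimpleGraph.mem_neighborSet, Set.mem_singleton_iff]
      rw [hx, hG'adj]
      constructor
      · rintro (⟨h3, h4⟩ | ⟨h3, h4⟩)
        · exact congrArg σ h3
        · exfalso
          exact h4 (add_right_cancel h3.symm)
      · intro hxe
        have h3 : σ.symm x = k + 1 + 1 := σ.injective hxe
        refine Or.inl ⟨h3, fun hc => h1 (add_eq_left.1 hc)⟩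
    have hnbrelse : ∀ i : Fin n, i ≠ k → i ≠ k + 1 →
        G'.neighborSet (σ i) = {σ (i + 1), σ (i - 1)} := by
      intro i hik hik1
      ext x
      have hx : x = σ (σ.symm x) := (σ.apply_symm_apply x).symm
      simp only [SimpleGraph.mem_neighborSet, Set.mem_insert_iff, Set.mem_singleton_iff]
      rw [hx, hG'adj]
      constructor
      · rintro (⟨h3, h4⟩ | ⟨h3, h4⟩)
        · exact Or.inl (congrArg σ h3)
        · refine Or.inr (congrArg σ ?_)
          rw [h3]; ring
      · rintro (hxe | hxe)
        · exact Or.inl ⟨σ.injective hxe, hik⟩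
        · have h3 : σ.symm x = i - 1 := σ.injective hxe
          refine Or.inr ⟨by rw [h3]; ring, ?_⟩
          rw [h3]
          intro hc
          exact hik1 (by rw [← hc]; ring)
    ext v
    have hv : v = σ (σ.symm v) := (σ.apply_symm_apply v).symm
    simp only [Set.mem_setOf_eq, Set.mem_insert_iff, Set.mem_singleton_iff]
    constructor
    · intro hl
      by_contra hcon
      push_neg at hcon
      obtain ⟨hc1, hc2⟩ := hcon
      have hik : σ.symm v ≠ k := fun hc => hc1 (by rw [hv, hc])
      have hik1 : σ.symm v ≠ k + 1 := fun hc => hc2 (by rw [hv, hc])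
      unfold IsLeaf at hl
      rw [hv, hnbrelse _ hik hik1] at hl
      have hne2 : σ (σ.symm v + 1) ≠ σ (σ.symm v - 1) := by
        intro hc
        have h3 := σ.injective hc
        have h5 : σ.symm v + (1 + 1) = σ.symm v + 0 := by
          rw [add_zero, ← add_assoc, h3]; ring
        exact h2 (add_left_cancel h5)
      rw [Set.ncard_pair hne2] at hl
      omega
    · intro hv2
      rcases hv2 with hv2 | hv2
      · unfold IsLeaf
        rw [hv2, hnbrk]
        exact Set.ncard_singleton _
      · unfold IsLeaf
        rw [hv2, hnbrk1]
        exact Set.ncard_singleton _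
  · -- the full arc from σ k to σ (k+1)
    obtain ⟨p, hpath, hwt, -⟩ := harc (n - 1) (le_refl _)
    have h9 : ((n - 1 : ℕ) : Fin n) + 1 = 0 := by
      have h3 : ((n - 1 : ℕ) : Fin n) + 1 = ((n - 1 + 1 : ℕ) : Fin n) := by
        push_cast; ring
      rw [h3, show n - 1 + 1 = n from by omega, Fin.natCast_self]
    have hend : k + 1 + ((n - 1 : ℕ) : Fin n) = k := by
      calc k + 1 + ((n - 1 : ℕ) : Fin n) = k + (((n - 1 : ℕ) : Fin n) + 1) := by ring
        _ = k + 0 := by rw [h9]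
        _ = k := add_zero k
    refine ⟨p.copy (congrArg σ hend) rfl, by rwa [Walk.isPath_copy], ?_⟩
    rw [walkWeight_copy', hwt]
    refine Finset.sum_nbij' (i := fun (j : ℕ) => k + 1 + (j : Fin n))
      (j := fun (i : Fin n) => (i - (k + 1)).val) ?_ ?_ ?_ ?_ ?_
    · intro j hj
      rw [Finset.mem_range] at hj
      exact Finset.mem_erase.2 ⟨hne_k j hj, Finset.mem_univ _⟩
    · intro i hi
      rw [Finset.mem_erase] at hi
      rw [Finset.mem_range]
      have hlt := (i - (k + 1)).isLt
      rcases Nat.lt_or_ge ((i - (k + 1)).val) (n - 1) with h3 | h3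
      · exact h3
      · exfalso
        have hv : (i - (k + 1)).val = n - 1 := by omega
        have h4 : (i - (k + 1) + 1).val = 0 := by
          rw [Fin.val_add, hv, Fin.val_one', Nat.mod_eq_of_lt (show (1 : ℕ) < n by omega),
            show n - 1 + 1 = n from by omega, Nat.mod_self]
        have h5 : i - (k + 1) + 1 = 0 := Fin.ext (by rw [h4, Fin.val_zero])
        have h6 : i - k = 0 := by rw [← h5]; ring
        exact hi.1 (sub_eq_zero.1 h6)
    · intro j hj
      rw [Finset.mem_range] at hj
      show ((k + 1 + (j : Fin n)) - (k + 1)).val = j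
      have h3 : k + 1 + (j : Fin n) - (k + 1) = (j : Fin n) := by ring
      rw [h3, Fin.val_natCast, Nat.mod_eq_of_lt (by omega)]
    · intro i _
      show k + 1 + (((i - (k + 1)).val : ℕ) : Fin n) = i
      rw [Fin.cast_val_eq_self]
      ring
    · intro j _
      rfl

end PolyAux

/-- A positive-weighted polygon which is not pruned has exactly one useless edge, and
deleting it yields a positive-weighted snake with the same 2-weights. -/
theorem stmt_9 {n : ℕ} [NeZero n] (hn : 3 ≤ n) (P : SimpleGraph (Fin n))
    (hpoly : IsPolygon P) (w : Sym2 (Fin n) → ℝ) (hw : PosWeights P w)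
    (hnp : ¬ Pruned P w) :
    ∃ e ∈ P.edgeSet, ¬ UsefulEdge P w e ∧
      (∀ e' ∈ P.edgeSet, ¬ UsefulEdge P w e' → e' = e) ∧
      IsSnake (P.deleteEdges {e}) ∧
      ∀ i j : Fin n, i ≠ j → wdist (P.deleteEdges {e}) w i j = wdist P w i j := by
  obtain ⟨σ, hP⟩ := hpoly
  rw [Pruned] at hnp
  push_neg at hnp
  obtain ⟨e, he, hu⟩ := hnp
  obtain ⟨k, hk⟩ : ∃ k : Fin n, s(σ k, σ (k + 1)) = e := by rw [hP] at he; exact he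
  subst hk
  have h1 : (1 : Fin n) ≠ 0 := fin_one_ne_zero' hn
  have hw0 : ∀ e ∈ P.edgeSet, 0 ≤ w e := fun e he => (hw e he).le
  have hEinj : ∀ i j : Fin n, s(σ i, σ (i + 1)) = s(σ j, σ (j + 1)) → i = j := by
    intro i j hij
    rw [Sym2.eq_iff] at hij
    rcases hij with ⟨ha, _⟩ | ⟨ha, hb⟩
    · exact σ.injective ha
    · exfalso
      have hij1 : i = j + 1 := σ.injective ha
      have hij2 : i + 1 = j := σ.injective hb
      rw [← hij2] at hij1
      have h5 : i + (1 + 1) = i + 0 := by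
        rw [add_zero, ← add_assoc]
        exact hij1.symm
      exact fin_two_ne_zero' hn (add_left_cancel h5)
  have hneσ : ∀ k' : Fin n, σ k' ≠ σ (k' + 1) := by
    intro k' hc
    exact h1 (left_eq_add.1 (σ.injective hc))
  -- the key inequality for any useless edge
  have keyk : ∀ k' : Fin n, ¬ UsefulEdge P w s(σ k', σ (k' + 1)) →
      ∑ i ∈ Finset.univ.erase k', w s(σ i, σ (i + 1)) ≤ w s(σ k', σ (k' + 1)) := by
    intro k' hu'
    obtain ⟨htree, -, q, hqpath, hqwt⟩ := polygon_delete_aux hn σ P hP k' w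
    rw [UsefulEdge] at hu'
    push_neg at hu'
    obtain ⟨p, hreal, hep⟩ := hu' (σ k') (σ (k' + 1)) (hneσ k')
    have hsub : ∀ e' ∈ p.edges, e' ∈ (P.deleteEdges {s(σ k', σ (k' + 1))}).edgeSet := by
      intro e' he'
      rw [SimpleGraph.edgeSet_deleteEdges]
      refine ⟨p.edges_subset_edgeSet he', ?_⟩
      intro hc
      rw [Set.mem_singleton_iff] at hc
      exact hep (hc ▸ he')
    have hq2 := (htree.existsUnique_path (σ k') (σ (k' + 1))).unique
      (hreal.1.transfer hsub) hqpath
    have h3 : wdist P w (σ k') (σ (k' + 1))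
        = ∑ i ∈ Finset.univ.erase k', w s(σ i, σ (i + 1)) := by
      rw [← hreal.2, ← hqwt, ← hq2, walkWeight_transfer']
    have hadj : P.Adj (σ k') (σ (k' + 1)) := by
      rw [← SimpleGraph.mem_edgeSet, hP]
      exact ⟨k', rfl⟩
    have hp1 : (Walk.cons hadj Walk.nil).IsPath := by
      rw [Walk.cons_isPath_iff]
      refine ⟨Walk.IsPath.nil, ?_⟩
      simp only [Walk.support_nil, List.mem_singleton]
      exact hneσ k'
    have hsingle := wdist_le_walkWeight hw0 _ hp1
    rw [walkWeight_cons', walkWeight_nil', add_zero] at hsingle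
    rw [← h3]
    exact hsingle
  obtain ⟨htree, hleaf, -⟩ := polygon_delete_aux hn σ P hP k w
  refine ⟨s(σ k, σ (k + 1)), by rw [hP]; exact ⟨k, rfl⟩, hu, ?_, ?_, ?_⟩
  · -- uniqueness of the useless edge
    intro e' he' hu'
    obtain ⟨k', hk'⟩ : ∃ k' : Fin n, s(σ k', σ (k' + 1)) = e' := by rw [hP] at he'; exact he'
    subst hk'
    by_contra hne
    have hkk : k' ≠ k := fun hc => hne (by rw [hc])
    have hA := keyk k hu
    have hA' := keyk k' hu'
    obtain ⟨m, hmk, hmk'⟩ : ∃ m : Fin n, m ≠ k ∧ m ≠ k' := by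
      by_contra hc
      push_neg at hc
      have hsub : (Finset.univ : Finset (Fin n)) ⊆ {k, k'} := by
        intro m _
        rcases eq_or_ne m k with rfl | hm
        · exact Finset.mem_insert_self _ _
        · rw [hc m hm]
          exact Finset.mem_insert.2 (Or.inr (Finset.mem_singleton_self _))
      have hcard := Finset.card_le_card hsub
      rw [Finset.card_univ, Fintype.card_fin] at hcard
      have hc2 := Finset.card_insert_le k ({k'} : Finset (Fin n))
      rw [Finset.card_singleton] at hc2
      omega
    have hpos : ∀ i : Fin n, 0 < w s(σ i, σ (i + 1)) := by
      intro i
      exact hw _ (by rw [hP]; exact ⟨i, rfl⟩)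
    have hb1 : w s(σ k', σ (k' + 1)) + w s(σ m, σ (m + 1))
        ≤ ∑ i ∈ Finset.univ.erase k, w s(σ i, σ (i + 1)) := by
      have hpair : ∑ i ∈ ({k', m} : Finset (Fin n)), w s(σ i, σ (i + 1))
          = w s(σ k', σ (k' + 1)) + w s(σ m, σ (m + 1)) :=
        Finset.sum_pair (show k' ≠ m from fun hc => hmk' hc.symm)
      rw [← hpair]
      refine Finset.sum_le_sum_of_subset_of_nonneg ?_ (fun i _ _ => (hpos i).le)
      intro x hx
      rw [Finset.mem_erase]
      refine ⟨?_, Finset.mem_univ x⟩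
      rcases Finset.mem_insert.1 hx with rfl | hx
      · exact hkk
      · rw [Finset.mem_singleton] at hx
        subst hx
        exact hmk
    have hb2 : w s(σ k, σ (k + 1)) + w s(σ m, σ (m + 1))
        ≤ ∑ i ∈ Finset.univ.erase k', w s(σ i, σ (i + 1)) := by
      have hpair : ∑ i ∈ ({k, m} : Finset (Fin n)), w s(σ i, σ (i + 1))
          = w s(σ k, σ (k + 1)) + w s(σ m, σ (m + 1)) :=
        Finset.sum_pair (show k ≠ m from fun hc => hmk hc.symm)
      rw [← hpair]
      refine Finset.sum_le_sum_of_subset_of_nonneg ?_ (fun i _ _ => (hpos i).le)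
      intro x hx
      rw [Finset.mem_erase]
      refine ⟨?_, Finset.mem_univ x⟩
      rcases Finset.mem_insert.1 hx with rfl | hx
      · exact fun hc => hkk hc.symm
      · rw [Finset.mem_singleton] at hx
        subst hx
        exact hmk'
    have := hpos m
    linarith
  · -- the snake
    exact ⟨htree, by rw [hleaf]; exact Set.ncard_pair (hneσ k)⟩
  · -- equality of 2-weights
    intro i j hij
    have hu2 := hu
    rw [UsefulEdge] at hu2
    push_neg at hu2
    obtain ⟨p, hreal, hep⟩ := hu2 i j hij
    have hw0' : ∀ e ∈ (P.deleteEdges {s(σ k, σ (k + 1))}).edgeSet, 0 ≤ w e := by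
      intro e he
      rw [SimpleGraph.edgeSet_deleteEdges] at he
      exact hw0 e he.1
    apply le_antisymm
    · have hsub : ∀ e' ∈ p.edges, e' ∈ (P.deleteEdges {s(σ k, σ (k + 1))}).edgeSet := by
        intro e' he'
        rw [SimpleGraph.edgeSet_deleteEdges]
        refine ⟨p.edges_subset_edgeSet he', ?_⟩
        intro hc
        rw [Set.mem_singleton_iff] at hc
        exact hep (hc ▸ he')
      have hle := wdist_le_walkWeight hw0'
        (p.transfer (P.deleteEdges {s(σ k, σ (k + 1))}) hsub) (hreal.1.transfer hsub)
      rwa [walkWeight_transfer', hreal.2] at hle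
    · apply csInf_le_csInf (bddBelow_weights hw0 i j)
      · obtain ⟨r⟩ := htree.isConnected.preconnected i j
        exact ⟨walkWeight _ w (r.toPath : (P.deleteEdges {s(σ k, σ (k + 1))}).Walk i j),
          (r.toPath : (P.deleteEdges {s(σ k, σ (k + 1))}).Walk i j), r.toPath.2, rfl⟩
      · rintro x ⟨p', hp', rfl⟩
        have hsub2 : ∀ e' ∈ p'.edges, e' ∈ P.edgeSet := by
          intro e' he'
          have := p'.edges_subset_edgeSet he'
          rw [SimpleGraph.edgeSet_deleteEdges] at this
          exact this.1
        exact ⟨p'.transfer P hsub2, hp'.transfer hsub2, walkWeight_transfer' p' hsub2⟩
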